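/- Let h : ℝ^d → [0,1] be measurable and ĥ(x) = E_{Z ∼ N(0, I_d)}[h(x + Z)]. Then the map x ↦ Φ⁻¹(ĥ(x)) is 1-Lipschitz continuous with respect to the Euclidean norm (on the set where ĥ takes values in (0,1)). -/

import Mathlib

open MeasureTheory
open scoped InnerProductSpace

/-- Standard normal pdf `φ`. -/
noncomputable def stdnpdf (t : ℝ) : ℝ := (Real.sqrt (2 * Real.pi))⁻¹ * Real.exp (-t ^ 2 / 2)

/-- Standard normal cdf `Φ`. -/
noncomputable def stdncdf (t : ℝ) : ℝ := ∫ s in Set.Iic t, stdnpdf s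

/-- Inverse of the standard normal cdf, `Φ⁻¹ : (0,1) → ℝ`. -/
noncomputable def stdninv : ℝ → ℝ := Function.invFun stdncdf

/-- Density of the standard Gaussian `N(0, I_d)` on `ℝ^d`. -/
noncomputable def gpdf (d : ℕ) (z : EuclideanSpace ℝ (Fin d)) : ℝ :=
  (2 * Real.pi) ^ (-(d : ℝ) / 2) * Real.exp (-‖z‖ ^ 2 / 2)

/-- Gaussian smoothing `ĥ(x) = E_{Z ∼ N(0, I_d)}[h(x + Z)]`. -/
noncomputable def gsmooth (d : ℕ) (h : EuclideanSpace ℝ (Fin d) → ℝ)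
    (x : EuclideanSpace ℝ (Fin d)) : ℝ :=
  ∫ z, h (x + z) * gpdf d z


lemma sqrt_two_pi_pos : 0 < Real.sqrt (2 * Real.pi) :=
  Real.sqrt_pos.2 (by positivity)

lemma stdnpdf_pos (t : ℝ) : 0 < stdnpdf t := by
  unfold stdnpdf
  have := sqrt_two_pi_pos
  positivity

lemma stdnpdf_le (t : ℝ) : stdnpdf t ≤ (Real.sqrt (2 * Real.pi))⁻¹ := by
  unfold stdnpdf
  nth_rewrite 2 [← mul_one ((Real.sqrt (2 * Real.pi))⁻¹)]
  gcongr
  exact Real.exp_le_one_iff.2 (by nlinarith [sq_nonneg t])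

lemma continuous_stdnpdf : Continuous stdnpdf := by
  unfold stdnpdf; fun_prop

lemma integrable_stdnpdf : Integrable stdnpdf := by
  have : stdnpdf = fun t => (Real.sqrt (2 * Real.pi))⁻¹ * Real.exp (-(2⁻¹ : ℝ) * t ^ 2) := by
    funext t; unfold stdnpdf; ring_nf
  rw [this]
  exact (integrable_exp_neg_mul_sq (by norm_num)).const_mul _

lemma integral_stdnpdf : ∫ t, stdnpdf t = 1 := by
  have : ∫ t, stdnpdf t = (Real.sqrt (2 * Real.pi))⁻¹ * ∫ t : ℝ, Real.exp (-(2⁻¹:ℝ) * t ^ 2) := by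
    rw [← integral_const_mul]
    congr 1; funext t; unfold stdnpdf; ring_nf
  rw [this, integral_gaussian]
  rw [show Real.pi / 2⁻¹ = 2 * Real.pi by ring]
  exact inv_mul_cancel₀ sqrt_two_pi_pos.ne'

lemma stdncdf_sub {a b : ℝ} (hab : a ≤ b) :
    stdncdf b - stdncdf a = ∫ s in Set.Ioc a b, stdnpdf s := by
  unfold stdncdf
  rw [← Set.Iic_union_Ioc_eq_Iic hab,
    setIntegral_union (Set.Iic_disjoint_Ioc le_rfl) measurableSet_Ioc
      integrable_stdnpdf.integrableOn integrable_stdnpdf.integrableOn]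
  ring

lemma stdncdf_strictMono : StrictMono stdncdf := by
  intro a b hab
  have h1 : 0 < ∫ s in Set.Ioc a b, stdnpdf s := by
    rw [setIntegral_pos_iff_support_of_nonneg_ae
      (Filter.Eventually.of_forall fun t => (stdnpdf_pos t).le)
      integrable_stdnpdf.integrableOn]
    have : Function.support stdnpdf = Set.univ := by
      ext t; simp [(stdnpdf_pos t).ne']
    rw [this, Set.univ_inter, Real.volume_Ioc]
    simp [hab]
  have := stdncdf_sub hab.le
  linarith

lemma lipschitz_stdncdf : LipschitzWith ⟨(Real.sqrt (2 * Real.pi))⁻¹,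
    inv_nonneg.2 sqrt_two_pi_pos.le⟩ stdncdf := by
  apply LipschitzWith.of_dist_le_mul
  have key : ∀ a b : ℝ, a ≤ b → stdncdf b - stdncdf a ≤ (Real.sqrt (2 * Real.pi))⁻¹ * (b - a) := by
    intro a b hab
    rw [stdncdf_sub hab]
    calc ∫ s in Set.Ioc a b, stdnpdf s
        ≤ ∫ _s in Set.Ioc a b, (Real.sqrt (2 * Real.pi))⁻¹ :=
          setIntegral_mono_on integrable_stdnpdf.integrableOn
            (integrableOn_const (by simp) enorm_ne_top)
            measurableSet_Ioc (fun t _ => stdnpdf_le t)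
      _ = (Real.sqrt (2 * Real.pi))⁻¹ * (b - a) := by
          rw [setIntegral_const, Real.volume_real_Ioc_of_le hab,
            smul_eq_mul]
          ring
  intro x y
  rcases le_total x y with hxy | hxy
  · rw [Real.dist_eq, Real.dist_eq, abs_of_nonpos (by linarith [(stdncdf_strictMono.monotone hxy : stdncdf x ≤ stdncdf y)]), abs_of_nonpos (by linarith)]
    have := key x y hxy
    push_cast
    show _ ≤ (Real.sqrt (2 * Real.pi))⁻¹ * _
    linarith
  · rw [Real.dist_eq, Real.dist_eq, abs_of_nonneg (by linarith [(stdncdf_strictMono.monotone hxy : stdncdf y ≤ stdncdf x)]), abs_of_nonneg (by linarith)]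
    have := key y x hxy
    push_cast
    show _ ≤ (Real.sqrt (2 * Real.pi))⁻¹ * _
    linarith

lemma continuous_stdncdf : Continuous stdncdf := lipschitz_stdncdf.continuous

lemma exists_stdncdf_eq {p : ℝ} (hp : p ∈ Set.Ioo (0:ℝ) 1) : ∃ a, stdncdf a = p := by
  obtain ⟨n, hn⟩ : ∃ n : ℕ, p < stdncdf n := by
    have htend : Filter.Tendsto (fun n : ℕ => stdncdf n) Filter.atTop (nhds 1) := by
      have h1 : Filter.Tendsto (fun n : ℕ => ∫ s in Set.Iic (n:ℝ), stdnpdf s)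
          Filter.atTop (nhds (∫ s in ⋃ n : ℕ, Set.Iic (n:ℝ), stdnpdf s)) :=
        tendsto_setIntegral_of_monotone (fun _ => measurableSet_Iic)
          (fun i j hij => Set.Iic_subset_Iic.2 (by exact_mod_cast hij))
          integrable_stdnpdf.integrableOn
      have h2 : (⋃ n : ℕ, Set.Iic (n:ℝ)) = Set.univ := by
        ext x
        simp only [Set.mem_iUnion, Set.mem_Iic, Set.mem_univ, iff_true]
        exact exists_nat_ge x
      rw [h2] at h1
      simpa [stdncdf, setIntegral_univ, integral_stdnpdf] using h1
    exact ((htend.eventually (eventually_gt_nhds hp.2)).exists).imp fun n h => h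
  obtain ⟨m, hm⟩ : ∃ m : ℕ, stdncdf (-(m:ℝ)) < p := by
    have htend : Filter.Tendsto (fun m : ℕ => stdncdf (-(m:ℝ))) Filter.atTop (nhds 0) := by
      have h1 : Filter.Tendsto (fun m : ℕ => ∫ s in Set.Iic (-(m:ℝ)), stdnpdf s)
          Filter.atTop (nhds (∫ s in ⋂ m : ℕ, Set.Iic (-(m:ℝ)), stdnpdf s)) :=
        tendsto_setIntegral_of_antitone (fun _ => measurableSet_Iic)
          (fun i j hij => Set.Iic_subset_Iic.2 (by push_cast; linarith [(Nat.cast_le (α := ℝ)).2 hij]))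
          ⟨0, integrable_stdnpdf.integrableOn⟩
      have h2 : (⋂ m : ℕ, Set.Iic (-(m:ℝ))) = ∅ := by
        ext x
        simp only [Set.mem_iInter, Set.mem_Iic, Set.mem_empty_iff_false, iff_false, not_forall,
          not_le]
        obtain ⟨m, hm⟩ := exists_nat_gt (-x)
        exact ⟨m, by linarith⟩
      rw [h2] at h1
      simpa [stdncdf] using h1
    exact ((htend.eventually (eventually_lt_nhds hp.1)).exists).imp fun n h => h
  have hle : (-(m:ℝ)) ≤ (n:ℝ) := by
    have : (0:ℝ) ≤ m := Nat.cast_nonneg m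
    have : (0:ℝ) ≤ n := Nat.cast_nonneg n
    linarith
  obtain ⟨a, _, ha⟩ := intermediate_value_Icc hle continuous_stdncdf.continuousOn
    ⟨hm.le, hn.le⟩
  exact ⟨a, ha⟩

lemma stdninv_stdncdf (a : ℝ) : stdninv (stdncdf a) = a :=
  Function.leftInverse_invFun stdncdf_strictMono.injective a

lemma stdncdf_stdninv {p : ℝ} (hp : p ∈ Set.Ioo (0:ℝ) 1) : stdncdf (stdninv p) = p :=
  Function.invFun_eq (exists_stdncdf_eq hp)

lemma gpdf_pos (d : ℕ) (z : EuclideanSpace ℝ (Fin d)) : 0 < gpdf d z := by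
  unfold gpdf
  have := Real.pi_pos
  positivity

lemma gpdf_prod (d : ℕ) (z : EuclideanSpace ℝ (Fin d)) :
    gpdf d z = ∏ i, stdnpdf (z i) := by
  unfold gpdf stdnpdf
  have h2pi : (0:ℝ) < 2 * Real.pi := by positivity
  have hnorm : ‖z‖ ^ 2 = ∑ i, z i ^ 2 := by
    rw [EuclideanSpace.norm_eq, Real.sq_sqrt (Finset.sum_nonneg fun i _ => sq_nonneg _)]
    simp [sq_abs]
  have hconst : (2 * Real.pi) ^ (-(d : ℝ) / 2) = ((Real.sqrt (2 * Real.pi))⁻¹) ^ d := by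
    have h1 : (Real.sqrt (2 * Real.pi))⁻¹ = (2 * Real.pi) ^ (-(1:ℝ)/2) := by
      rw [Real.sqrt_eq_rpow, ← Real.rpow_neg h2pi.le]
      norm_num
    rw [h1, ← Real.rpow_natCast ((2 * Real.pi) ^ (-(1:ℝ)/2)) d, ← Real.rpow_mul h2pi.le]
    congr 1
    ring
  rw [hconst, hnorm, Finset.prod_mul_distrib, Finset.prod_const, Finset.card_fin]
  congr 1
  rw [← Real.exp_sum]
  congr 1
  rw [← Finset.sum_div, ← Finset.sum_neg_distrib]

lemma integrable_gpdf (d : ℕ) : Integrable (gpdf d) := by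
  have hep := EuclideanSpace.volume_preserving_symm_measurableEquiv_toLp (Fin d)
  have hemb := ((MeasurableEquiv.toLp 2 (Fin d → ℝ)).symm).symm.measurableEmbedding
  rw [← (hep.symm).integrable_comp_emb hemb]
  have : (gpdf d ∘ ((MeasurableEquiv.toLp 2 (Fin d → ℝ)).symm).symm)
      = fun v : Fin d → ℝ => ∏ i, stdnpdf (v i) := by
    funext v
    simp only [Function.comp_apply, gpdf_prod]
    rfl
  rw [this]
  exact Integrable.fintype_prod fun _ => integrable_stdnpdf

lemma measurable_gpdf (d : ℕ) : Measurable (gpdf d) := by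
  unfold gpdf
  fun_prop

/-- Half-space Gaussian integral. -/
lemma halfspace_integral (d : ℕ) {u : EuclideanSpace ℝ (Fin d)} (hu : ‖u‖ = 1) (r : ℝ) :
    ∫ z in {z : EuclideanSpace ℝ (Fin d) | ⟪z, u⟫_ℝ ≤ r}, gpdf d z = stdncdf r := by
  rcases isEmpty_or_nonempty (Fin d) with hd | hd
  · exfalso
    have : u = 0 := Subsingleton.elim u 0
    rw [this, norm_zero] at hu
    norm_num at hu
  classical
  set i₀ : Fin d := Classical.arbitrary (Fin d)
  -- extend u to an orthonormal basis
  have hcard : Module.finrank ℝ (EuclideanSpace ℝ (Fin d)) = Fintype.card (Fin d) := by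
    simp [finrank_euclideanSpace_fin]
  have horth : Orthonormal ℝ (({i₀} : Set (Fin d)).restrict (fun _ => u)) := by
    constructor
    · intro i; exact hu
    · intro i j hij
      exact absurd (Subtype.ext (i.2.trans j.2.symm)) hij
  obtain ⟨b, hb⟩ := horth.exists_orthonormalBasis_extension_of_card_eq hcard
  have hbu : b i₀ = u := hb i₀ rfl
  -- rotate
  have hrot : {z : EuclideanSpace ℝ (Fin d) | ⟪z, u⟫_ℝ ≤ r}
      = ⇑b.repr ⁻¹' {w : EuclideanSpace ℝ (Fin d) | w i₀ ≤ r} := by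
    ext z
    simp only [Set.mem_setOf_eq, Set.mem_preimage]
    rw [show (b.repr z) i₀ = ⟪b i₀, z⟫_ℝ from b.repr_apply_apply z i₀, hbu,
      real_inner_comm]
  have hmeas_set : MeasurableSet {w : EuclideanSpace ℝ (Fin d) | w i₀ ≤ r} := by
    have : Measurable (fun w : EuclideanSpace ℝ (Fin d) => w i₀) :=
      (measurable_pi_apply i₀).comp ((MeasurableEquiv.toLp 2 (Fin d → ℝ)).symm).measurable
    exact measurableSet_le this measurable_const
  rw [hrot]
  have h1 : ∫ z in ⇑b.repr ⁻¹' {w : EuclideanSpace ℝ (Fin d) | w i₀ ≤ r}, gpdf d z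
      = ∫ z in ⇑b.repr ⁻¹' {w : EuclideanSpace ℝ (Fin d) | w i₀ ≤ r}, gpdf d (b.repr z) := by
    refine setIntegral_congr_fun (hmeas_set.preimage b.repr.toHomeomorph.measurable) ?_
    intro z _
    simp only [gpdf, LinearIsometryEquiv.norm_map]
  rw [h1, b.measurePreserving_repr.setIntegral_preimage_emb
    b.repr.toHomeomorph.measurableEmbedding (gpdf d) _]
  -- transfer to the product space
  have h2 : ∫ w in {w : EuclideanSpace ℝ (Fin d) | w i₀ ≤ r}, gpdf d w
      = ∫ w in ⇑((MeasurableEquiv.toLp 2 (Fin d → ℝ)).symm) ⁻¹' {v : Fin d → ℝ | v i₀ ≤ r},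
          (fun v : Fin d → ℝ => ∏ i, stdnpdf (v i)) (((MeasurableEquiv.toLp 2 (Fin d → ℝ)).symm) w) := by
    refine setIntegral_congr_fun hmeas_set ?_
    intro w _
    rw [gpdf_prod]
    rfl
  have hmeas_set' : MeasurableSet {v : Fin d → ℝ | v i₀ ≤ r} :=
    measurableSet_le (measurable_pi_apply i₀) measurable_const
  have h4 := (EuclideanSpace.volume_preserving_symm_measurableEquiv_toLp (Fin d)).setIntegral_preimage_emb
    ((MeasurableEquiv.toLp 2 (Fin d → ℝ)).symm).measurableEmbedding
    (fun v : Fin d → ℝ => ∏ i, stdnpdf (v i)) {v : Fin d → ℝ | v i₀ ≤ r}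
  rw [h2, h4]
  -- compute the product integral
  classical
  set f : Fin d → ℝ → ℝ := fun i => if i = i₀ then (Set.Iic r).indicator stdnpdf else stdnpdf
    with hf
  have h3 : ∫ v in {v : Fin d → ℝ | v i₀ ≤ r}, ∏ i, stdnpdf (v i)
      = ∫ v : Fin d → ℝ, ∏ i, f i (v i) := by
    rw [← integral_indicator hmeas_set']
    congr 1
    funext v
    by_cases hv : v i₀ ≤ r
    · rw [Set.indicator_of_mem (show v ∈ {v : Fin d → ℝ | v i₀ ≤ r} from hv)]
      refine Finset.prod_congr rfl fun i _ => ?_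
      by_cases hi : i = i₀
      · subst hi
        simp [hf, Set.indicator_apply, hv]
      · simp [hf, hi]
    · rw [Set.indicator_of_notMem (show v ∉ {v : Fin d → ℝ | v i₀ ≤ r} from hv)]
      refine (Finset.prod_eq_zero (Finset.mem_univ i₀) ?_).symm
      simp [hf, Set.indicator_apply, hv]
  rw [h3, MeasureTheory.integral_fintype_prod_volume_eq_prod f]
  rw [Finset.prod_eq_single i₀ ?_ ?_]
  · simp only [hf, if_pos rfl]
    rw [integral_indicator measurableSet_Iic]
    rfl
  · intro i _ hi
    simp only [hf, if_neg hi]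
    exact integral_stdnpdf
  · intro hcontra
    exact absurd (Finset.mem_univ i₀) hcontra

lemma halfspace_integral' (d : ℕ) {u : EuclideanSpace ℝ (Fin d)} (hu : ‖u‖ = 1) (r : ℝ)
    (c : EuclideanSpace ℝ (Fin d)) :
    ∫ z in {z : EuclideanSpace ℝ (Fin d) | ⟪z - c, u⟫_ℝ ≤ r}, gpdf d (z - c) = stdncdf r := by
  have hmp := measurePreserving_add_left (volume : Measure (EuclideanSpace ℝ (Fin d))) c
  have hemb : MeasurableEmbedding (fun z : EuclideanSpace ℝ (Fin d) => c + z) :=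
    (Homeomorph.addLeft c).measurableEmbedding
  have h0 := hmp.setIntegral_preimage_emb hemb (fun z => gpdf d (z - c))
    {z : EuclideanSpace ℝ (Fin d) | ⟪z - c, u⟫_ℝ ≤ r}
  rw [← h0]
  have hset : (fun z : EuclideanSpace ℝ (Fin d) => c + z) ⁻¹'
      {z : EuclideanSpace ℝ (Fin d) | ⟪z - c, u⟫_ℝ ≤ r}
      = {z : EuclideanSpace ℝ (Fin d) | ⟪z, u⟫_ℝ ≤ r} := by
    ext z
    simp [add_sub_cancel_left]
  rw [hset]
  have : ∀ z : EuclideanSpace ℝ (Fin d), gpdf d (c + z - c) = gpdf d z := by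
    intro z; rw [add_sub_cancel_left]
  simp only [this]
  exact halfspace_integral d hu r

lemma gsmooth_eq (d : ℕ) (h : EuclideanSpace ℝ (Fin d) → ℝ) (c : EuclideanSpace ℝ (Fin d)) :
    gsmooth d h c = ∫ z, h z * gpdf d (z - c) := by
  have h0 := integral_add_left_eq_self (μ := (volume : Measure (EuclideanSpace ℝ (Fin d))))
    (fun z => h z * gpdf d (z - c)) c
  simp only [add_sub_cancel_left] at h0
  unfold gsmooth
  exact h0

lemma integrable_gpdf_sub (d : ℕ) (c : EuclideanSpace ℝ (Fin d)) :
    Integrable (fun z => gpdf d (z - c)) := by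
  have hemb : MeasurableEmbedding (fun z : EuclideanSpace ℝ (Fin d) => c + z) :=
    (Homeomorph.addLeft c).measurableEmbedding
  refine ((measurePreserving_add_left (volume : Measure (EuclideanSpace ℝ (Fin d))) c).integrable_comp_emb hemb).1 ?_
  have : ((fun z => gpdf d (z - c)) ∘ (fun w : EuclideanSpace ℝ (Fin d) => c + w)) = gpdf d := by
    funext w; simp [Function.comp, add_sub_cancel_left]
  rw [this]
  exact integrable_gpdf d

lemma core_ineq (d : ℕ) (h : EuclideanSpace ℝ (Fin d) → ℝ) (hmeas : Measurable h)
    (hrange : ∀ x, h x ∈ Set.Icc (0:ℝ) 1) {x y : EuclideanSpace ℝ (Fin d)} (hxy : x ≠ y)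
    {a : ℝ} (ha : stdncdf a = gsmooth d h x) :
    stdncdf (a - dist x y) ≤ gsmooth d h y := by
  set δ := dist x y with hδdef
  have hδ : 0 < δ := dist_pos.2 hxy
  set u : EuclideanSpace ℝ (Fin d) := δ⁻¹ • (y - x) with hudef
  have hu : ‖u‖ = 1 := by
    rw [hudef, norm_smul, norm_inv, Real.norm_eq_abs, abs_of_pos hδ, ← dist_eq_norm,
      dist_comm y x, ← hδdef]
    exact inv_mul_cancel₀ hδ.ne'
  have hyx : y = x + δ • u := by
    rw [hudef, smul_inv_smul₀ hδ.ne', add_sub_cancel]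
  set A : Set (EuclideanSpace ℝ (Fin d)) := {z | ⟪z - x, u⟫_ℝ ≤ a} with hAdef
  have hcont : Continuous (fun z : EuclideanSpace ℝ (Fin d) => ⟪z - x, u⟫_ℝ) :=
    (continuous_id.sub continuous_const).inner continuous_const
  have hA : MeasurableSet A := measurableSet_le hcont.measurable measurable_const
  set indA : EuclideanSpace ℝ (Fin d) → ℝ := A.indicator (fun _ => 1) with hindAdef
  have hindA_meas : Measurable indA := measurable_const.indicator hA
  have hindA_vals : ∀ z, indA z = 0 ∨ indA z = 1 := by
    intro z
    by_cases hz : z ∈ A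
    · right; simp [hindAdef, hz]
    · left; simp [hindAdef, hz]
  have hindA_mem : ∀ z, z ∈ A → indA z = 1 := fun z hz => by simp [hindAdef, hz]
  have hindA_nmem : ∀ z, z ∉ A → indA z = 0 := fun z hz => by simp [hindAdef, hz]
  -- integral of indicator against shifted gaussian
  have hind_int : ∀ c : EuclideanSpace ℝ (Fin d),
      ∫ z, indA z * gpdf d (z - c) = ∫ z in A, gpdf d (z - c) := by
    intro c
    rw [← integral_indicator hA]
    congr 1
    funext z
    by_cases hz : z ∈ A
    · simp [hindA_mem z hz, Set.indicator_of_mem hz]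
    · simp [hindA_nmem z hz, Set.indicator_of_notMem hz]
  -- the two half-space integrals
  have hΦx : ∫ z in A, gpdf d (z - x) = stdncdf a := halfspace_integral' d hu a x
  have hΦy : ∫ z in A, gpdf d (z - y) = stdncdf (a - δ) := by
    have hinner : ⟪y, u⟫_ℝ = ⟪x, u⟫_ℝ + δ := by
      rw [hyx, inner_add_left, real_inner_smul_left, real_inner_self_eq_norm_sq, hu]
      ring
    have hAy : A = {z | ⟪z - y, u⟫_ℝ ≤ a - δ} := by
      ext z
      simp only [hAdef, Set.mem_setOf_eq, inner_sub_left]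
      constructor <;> intro hle <;> linarith
    rw [hAy]
    exact halfspace_integral' d hu (a - δ) y
  -- integrabilities
  have hbd : ∃ C, ∀ z, ‖h z‖ ≤ C := ⟨1, fun z => by
    rw [Real.norm_eq_abs, abs_le]; exact ⟨by linarith [(hrange z).1], (hrange z).2⟩⟩
  have hbdind : ∃ C, ∀ z, ‖indA z‖ ≤ C := ⟨1, fun z => by
    rcases hindA_vals z with h0 | h0 <;> rw [h0] <;> norm_num⟩
  have ihx : Integrable (fun z => h z * gpdf d (z - x)) :=
    (integrable_gpdf_sub d x).bdd_mul hmeas.aestronglyMeasurable (Filter.Eventually.of_forall hbd.choose_spec)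
  have ihy : Integrable (fun z => h z * gpdf d (z - y)) :=
    (integrable_gpdf_sub d y).bdd_mul hmeas.aestronglyMeasurable (Filter.Eventually.of_forall hbd.choose_spec)
  have iAx : Integrable (fun z => indA z * gpdf d (z - x)) :=
    (integrable_gpdf_sub d x).bdd_mul hindA_meas.aestronglyMeasurable (Filter.Eventually.of_forall hbdind.choose_spec)
  have iAy : Integrable (fun z => indA z * gpdf d (z - y)) :=
    (integrable_gpdf_sub d y).bdd_mul hindA_meas.aestronglyMeasurable (Filter.Eventually.of_forall hbdind.choose_spec)
  -- likelihood ratio identity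
  have hratio : ∀ z, gpdf d (z - y)
      = gpdf d (z - x) * Real.exp (δ * ⟪z - x, u⟫_ℝ - δ ^ 2 / 2) := by
    intro z
    have hzy : z - y = (z - x) - δ • u := by rw [hyx]; abel
    unfold gpdf
    rw [hzy, norm_sub_sq_real, real_inner_smul_right, norm_smul, Real.norm_eq_abs,
      abs_of_pos hδ, hu, mul_one, mul_assoc, ← Real.exp_add]
    congr 2
    ring
  set t : ℝ := Real.exp (δ * a - δ ^ 2 / 2) with htdef
  -- pointwise comparison
  have key : ∀ z, t * (h z * gpdf d (z - x) - indA z * gpdf d (z - x))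
      ≤ h z * gpdf d (z - y) - indA z * gpdf d (z - y) := by
    intro z
    have hg : 0 < gpdf d (z - x) := gpdf_pos d _
    rw [hratio z]
    set w := ⟪z - x, u⟫_ℝ with hwdef
    by_cases hz : z ∈ A
    · have hw : w ≤ a := hz
      have hind : indA z = 1 := hindA_mem z hz
      have hexp : Real.exp (δ * w - δ ^ 2 / 2) ≤ t := by
        rw [htdef]
        exact Real.exp_le_exp.2 (by nlinarith)
      have hh1 : h z - 1 ≤ 0 := by linarith [(hrange z).2]
      rw [hind]
      have hexp_pos : 0 < Real.exp (δ * w - δ ^ 2 / 2) := Real.exp_pos _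
      nlinarith [mul_nonneg (mul_nonneg (neg_nonneg.2 hh1) hg.le) (sub_nonneg.2 hexp)]
    · have hw : a ≤ w := le_of_not_ge hz
      have hind : indA z = 0 := hindA_nmem z hz
      have hexp : t ≤ Real.exp (δ * w - δ ^ 2 / 2) := by
        rw [htdef]
        exact Real.exp_le_exp.2 (by nlinarith)
      have hh0 : 0 ≤ h z := (hrange z).1
      rw [hind]
      have ht_pos : 0 < t := Real.exp_pos _
      nlinarith [mul_nonneg (mul_nonneg hh0 hg.le) (sub_nonneg.2 hexp)]
  -- integrate the comparison
  have hmono := integral_mono (((ihx.sub iAx).const_mul t)) (ihy.sub iAy) key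
  simp only [Pi.sub_apply] at hmono
  rw [integral_const_mul, integral_sub ihx iAx, integral_sub ihy iAy,
    hind_int x, hind_int y, hΦx, hΦy, ← gsmooth_eq, ← gsmooth_eq, ← ha] at hmono
  simp only [sub_self, mul_zero] at hmono
  linarith

/-- `x ↦ Φ⁻¹(ĥ(x))` is 1-Lipschitz on the set where `ĥ ∈ (0,1)`. -/
theorem stmt_3 (d : ℕ) (h : EuclideanSpace ℝ (Fin d) → ℝ) (hmeas : Measurable h)
    (hrange : ∀ x, h x ∈ Set.Icc (0:ℝ) 1) :
    LipschitzOnWith 1 (fun x => stdninv (gsmooth d h x))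
      {x | gsmooth d h x ∈ Set.Ioo (0:ℝ) 1} := by
  have key : ∀ p q : EuclideanSpace ℝ (Fin d),
      gsmooth d h p ∈ Set.Ioo (0:ℝ) 1 → gsmooth d h q ∈ Set.Ioo (0:ℝ) 1 →
      stdninv (gsmooth d h p) - stdninv (gsmooth d h q) ≤ dist p q := by
    intro p q hp hq
    rcases eq_or_ne p q with rfl | hpq
    · simp
    have ha : stdncdf (stdninv (gsmooth d h p)) = gsmooth d h p := stdncdf_stdninv hp
    have hb : stdncdf (stdninv (gsmooth d h q)) = gsmooth d h q := stdncdf_stdninv hq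
    have hcore := core_ineq d h hmeas hrange hpq ha
    rw [← hb] at hcore
    have := stdncdf_strictMono.le_iff_le.1 hcore
    linarith
  rw [lipschitzOnWith_iff_dist_le_mul]
  intro p hp q hq
  rw [NNReal.coe_one, one_mul, Real.dist_eq, abs_sub_le_iff]
  exact ⟨key p q hp hq, by rw [dist_comm]; exact key q p hq hp⟩
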